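/- Let q be a positive definite real quadratic form on ℝ^n such that q(x) ≥ 1 for all nonzero integral vectors x ∈ ℤ^n, and let q_A(y) = Σ_{i=1}^m y_i^2 − Σ_{i=1}^{m-1} y_i y_{i+1} be the quadratic form of the Dynkin diagram A_m. Then the tensor product form q ⊗ q_A on ℝ^{nm} satisfies (q ⊗ q_A)(x) ≥ 1 for every nonzero integral vector x ∈ ℤ^{nm}. -/

import Mathlib

open Matrix Kronecker

private def tdRR (n : ℕ) (u : Fin n → ℤ) : Fin n → ℝ := fun a => (u a : ℝ)

private def tdXi (n m : ℕ) (x : Fin n × Fin (m + 1) → ℤ) : ℕ → Fin n → ℤ :=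
  fun k => if h : k < m + 1 then (fun a => x (a, ⟨k, h⟩)) else 0

private def tdVi (n m : ℕ) (x : Fin n × Fin (m + 1) → ℤ) : ℕ → Fin n → ℤ :=
  fun k => if k = 0 then 0 else tdXi n m x (k - 1)

private def tdWi (n m : ℕ) (x : Fin n × Fin (m + 1) → ℤ) : ℕ → Fin n → ℤ :=
  fun k => tdVi n m x (k + 1) - tdVi n m x k

private lemma tdVi_succ (n m : ℕ) (x : Fin n × Fin (m + 1) → ℤ) (k : ℕ) :
    tdVi n m x (k + 1) = tdXi n m x k := by simp [tdVi]

private lemma tdXi_top (n m : ℕ) (x : Fin n × Fin (m + 1) → ℤ) {k : ℕ} (h : m + 1 ≤ k) :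
    tdXi n m x k = 0 := by simp [tdXi, Nat.not_lt.mpr h]

private lemma tdRR_zero (n : ℕ) : tdRR n 0 = 0 := by funext a; simp [tdRR]

private lemma tdRR_sub (n : ℕ) (u v : Fin n → ℤ) :
    tdRR n (u - v) = tdRR n u - tdRR n v := by
  funext a; simp [tdRR]

private lemma tdSym (n : ℕ) (Z : Matrix (Fin n) (Fin n) ℝ) (hsym : Z.IsSymm)
    (u t : Fin n → ℝ) : u ⬝ᵥ Z.mulVec t = t ⬝ᵥ Z.mulVec u := by
  rw [Matrix.dotProduct_mulVec]
  conv_lhs => rw [← hsym]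
  rw [Matrix.vecMul_transpose, dotProduct_comm]

private lemma tdQsub (n : ℕ) (Z : Matrix (Fin n) (Fin n) ℝ) (hsym : Z.IsSymm)
    (u t : Fin n → ℝ) : (u - t) ⬝ᵥ Z.mulVec (u - t) =
      u ⬝ᵥ Z.mulVec u - 2 * (u ⬝ᵥ Z.mulVec t) + t ⬝ᵥ Z.mulVec t := by
  rw [Matrix.mulVec_sub, sub_dotProduct, dotProduct_sub,
    dotProduct_sub, tdSym n Z hsym t u]
  ring

private def tdBN (n m : ℕ) (Z : Matrix (Fin n) (Fin n) ℝ)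
    (x : Fin n × Fin (m + 1) → ℤ) (k l : ℕ) : ℝ :=
  tdRR n (tdXi n m x k) ⬝ᵥ Z.mulVec (tdRR n (tdXi n m x l))

private lemma tdBN_sym (n m : ℕ) (Z : Matrix (Fin n) (Fin n) ℝ) (hsym : Z.IsSymm)
    (x : Fin n × Fin (m + 1) → ℤ) (k l : ℕ) :
    tdBN n m Z x k l = tdBN n m Z x l k := tdSym n Z hsym _ _

private lemma tdBN_top_left (n m : ℕ) (Z : Matrix (Fin n) (Fin n) ℝ)
    (x : Fin n × Fin (m + 1) → ℤ) {k : ℕ} (h : m + 1 ≤ k) (l : ℕ) :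
    tdBN n m Z x k l = 0 := by
  simp [tdBN, tdXi_top n m x h, tdRR_zero, zero_dotProduct]

private lemma tdCol (n m : ℕ) (x : Fin n × Fin (m + 1) → ℤ) (i : Fin (m + 1)) :
    (fun a => (x (a, i) : ℝ)) = tdRR n (tdXi n m x (i : ℕ)) := by
  funext a; simp [tdRR, tdXi, i.isLt]

private lemma tdAcoef (m : ℕ) (A : Matrix (Fin (m + 1)) (Fin (m + 1)) ℝ)
    (hA : A = Matrix.of fun (i j : Fin (m + 1)) => if i = j then 1 else
      if (i : ℕ) + 1 = (j : ℕ) ∨ (j : ℕ) + 1 = (i : ℕ) then -(1 / 2) else 0)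
    (i j : Fin (m + 1)) :
    A i j = (if (i : ℕ) = (j : ℕ) then (1:ℝ) else 0) +
      (if (i : ℕ) + 1 = (j : ℕ) then -(1 / 2) else 0) +
      (if (j : ℕ) + 1 = (i : ℕ) then -(1 / 2) else 0) := by
  rw [hA]
  simp only [Matrix.of_apply, Fin.ext_iff]
  split_ifs <;> first | omega | norm_num

private lemma tdExpand (n m : ℕ) (Z : Matrix (Fin n) (Fin n) ℝ)
    (A : Matrix (Fin (m+1)) (Fin (m+1)) ℝ) (x : Fin n × Fin (m + 1) → ℤ) :
    (fun p => (x p : ℝ)) ⬝ᵥ (Z ⊗ₖ A).mulVec (fun p => (x p : ℝ)) =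
      ∑ i : Fin (m+1), ∑ j : Fin (m+1), A i j *
        ((fun a => (x (a, i) : ℝ)) ⬝ᵥ Z.mulVec (fun a => (x (a, j) : ℝ))) := by
  simp only [dotProduct, Matrix.mulVec, kroneckerMap_apply, Fintype.sum_prod_type,
    Finset.mul_sum, Finset.sum_mul]
  rw [Finset.sum_comm]
  refine Finset.sum_congr rfl fun i _ => ?_
  have h1 : ∀ a : Fin n, ∑ b : Fin n, ∑ j : Fin (m+1),
      (x (a, i) : ℝ) * (Z a b * A i j * (x (b, j) : ℝ)) =
      ∑ j : Fin (m+1), ∑ b : Fin n,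
      (x (a, i) : ℝ) * (Z a b * A i j * (x (b, j) : ℝ)) := fun a => Finset.sum_comm
  simp only [h1]
  rw [Finset.sum_comm]
  refine Finset.sum_congr rfl fun j _ => ?_
  refine Finset.sum_congr rfl fun a _ => ?_
  refine Finset.sum_congr rfl fun b _ => ?_
  ring

private lemma tdIdentity (n m : ℕ) (Z : Matrix (Fin n) (Fin n) ℝ) (hsym : Z.IsSymm)
    (A : Matrix (Fin (m+1)) (Fin (m+1)) ℝ)
    (hA : A = Matrix.of fun (i j : Fin (m + 1)) => if i = j then 1 else
      if (i : ℕ) + 1 = (j : ℕ) ∨ (j : ℕ) + 1 = (i : ℕ) then -(1 / 2) else 0)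
    (x : Fin n × Fin (m + 1) → ℤ) :
    (fun p => (x p : ℝ)) ⬝ᵥ (Z ⊗ₖ A).mulVec (fun p => (x p : ℝ)) =
      (1/2) * ∑ k ∈ Finset.range (m+2),
        tdRR n (tdWi n m x k) ⬝ᵥ Z.mulVec (tdRR n (tdWi n m x k)) := by
  rw [tdExpand]
  -- LHS to ℕ-indexed double sum
  have hL : ∑ i : Fin (m+1), ∑ j : Fin (m+1), A i j *
      ((fun a => (x (a, i) : ℝ)) ⬝ᵥ Z.mulVec (fun a => (x (a, j) : ℝ))) =
      ∑ k ∈ Finset.range (m+1), ∑ l ∈ Finset.range (m+1),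
        ((if k = l then (1:ℝ) else 0) + (if k + 1 = l then -(1/2) else 0) +
          (if l + 1 = k then -(1/2) else 0)) * tdBN n m Z x k l := by
    rw [← Fin.sum_univ_eq_sum_range (fun k => ∑ l ∈ Finset.range (m+1),
      ((if k = l then (1:ℝ) else 0) + (if k + 1 = l then -(1/2) else 0) +
        (if l + 1 = k then -(1/2) else 0)) * tdBN n m Z x k l) (m+1)]
    refine Finset.sum_congr rfl fun i _ => ?_
    rw [← Fin.sum_univ_eq_sum_range (fun l =>
      ((if (i:ℕ) = l then (1:ℝ) else 0) + (if (i:ℕ) + 1 = l then -(1/2) else 0) +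
        (if l + 1 = (i:ℕ) then -(1/2) else 0)) * tdBN n m Z x i l) (m+1)]
    refine Finset.sum_congr rfl fun j _ => ?_
    rw [tdAcoef m A hA i j, tdCol n m x i, tdCol n m x j]
    rfl
  rw [hL]
  simp only [add_mul, Finset.sum_add_distrib]
  have hT1 : ∑ k ∈ Finset.range (m+1), ∑ l ∈ Finset.range (m+1),
      (if k = l then (1:ℝ) else 0) * tdBN n m Z x k l =
      ∑ k ∈ Finset.range (m+1), tdBN n m Z x k k := by
    refine Finset.sum_congr rfl fun k hk => ?_
    simp [ite_mul, Finset.sum_ite_eq, Finset.mem_range.mp hk]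
  have hT2 : ∑ k ∈ Finset.range (m+1), ∑ l ∈ Finset.range (m+1),
      (if k + 1 = l then -(1/2:ℝ) else 0) * tdBN n m Z x k l =
      ∑ k ∈ Finset.range m, -(1/2:ℝ) * tdBN n m Z x (k+1) k := by
    have inner : ∀ k, ∑ l ∈ Finset.range (m+1),
        (if k + 1 = l then -(1/2:ℝ) else 0) * tdBN n m Z x k l =
        if k + 1 ∈ Finset.range (m+1) then -(1/2:ℝ) * tdBN n m Z x k (k+1) else 0 := by
      intro k
      rw [← Finset.sum_ite_eq (Finset.range (m+1)) (k+1)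
        (fun l => -(1/2:ℝ) * tdBN n m Z x k l)]
      exact Finset.sum_congr rfl fun l _ => by split_ifs <;> simp
    simp only [inner, Finset.mem_range]
    rw [Finset.sum_range_succ, if_neg (by omega)]
    rw [add_zero]
    refine Finset.sum_congr rfl fun k hk => ?_
    rw [if_pos (Nat.succ_lt_succ (Finset.mem_range.mp hk)),
      tdBN_sym n m Z hsym x k (k+1)]
  have hT3 : ∑ k ∈ Finset.range (m+1), ∑ l ∈ Finset.range (m+1),
      (if l + 1 = k then -(1/2:ℝ) else 0) * tdBN n m Z x k l =
      ∑ k ∈ Finset.range m, -(1/2:ℝ) * tdBN n m Z x (k+1) k := by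
    rw [Finset.sum_comm]
    have inner : ∀ l, ∑ k ∈ Finset.range (m+1),
        (if l + 1 = k then -(1/2:ℝ) else 0) * tdBN n m Z x k l =
        if l + 1 ∈ Finset.range (m+1) then -(1/2:ℝ) * tdBN n m Z x (l+1) l else 0 := by
      intro l
      rw [← Finset.sum_ite_eq (Finset.range (m+1)) (l+1)
        (fun k => -(1/2:ℝ) * tdBN n m Z x k l)]
      exact Finset.sum_congr rfl fun k _ => by split_ifs <;> simp
    simp only [inner, Finset.mem_range]
    rw [Finset.sum_range_succ, if_neg (by omega), add_zero]
    exact Finset.sum_congr rfl fun k hk =>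
      by rw [if_pos (Nat.succ_lt_succ (Finset.mem_range.mp hk))]
  rw [hT1, hT2, hT3]
  -- RHS expansion
  have hq : ∀ k, tdRR n (tdWi n m x k) ⬝ᵥ Z.mulVec (tdRR n (tdWi n m x k)) =
      tdBN n m Z x k k
        - 2 * (tdRR n (tdXi n m x k) ⬝ᵥ Z.mulVec (tdRR n (tdVi n m x k)))
        + tdRR n (tdVi n m x k) ⬝ᵥ Z.mulVec (tdRR n (tdVi n m x k)) := by
    intro k
    have : tdRR n (tdWi n m x k) =
        tdRR n (tdXi n m x k) - tdRR n (tdVi n m x k) := by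
      rw [tdWi, tdRR_sub, tdVi_succ]
    rw [this, tdQsub n Z hsym]
    rfl
  simp only [hq, Finset.sum_add_distrib, Finset.sum_sub_distrib]
  have hR1 : ∑ k ∈ Finset.range (m+2), tdBN n m Z x k k =
      ∑ k ∈ Finset.range (m+1), tdBN n m Z x k k := by
    rw [Finset.sum_range_succ, tdBN_top_left n m Z x (le_refl (m+1)), add_zero]
  have hR2 : ∑ k ∈ Finset.range (m+2),
      tdRR n (tdVi n m x k) ⬝ᵥ Z.mulVec (tdRR n (tdVi n m x k)) =
      ∑ k ∈ Finset.range (m+1), tdBN n m Z x k k := by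
    rw [Finset.sum_range_succ']
    have h0 : tdRR n (tdVi n m x 0) ⬝ᵥ Z.mulVec (tdRR n (tdVi n m x 0)) = 0 := by
      simp [tdVi, tdRR_zero]
    rw [h0, add_zero]
    exact Finset.sum_congr rfl fun k _ => by rw [tdVi_succ]; rfl
  have hR3 : ∑ k ∈ Finset.range (m+2),
      tdRR n (tdXi n m x k) ⬝ᵥ Z.mulVec (tdRR n (tdVi n m x k)) =
      ∑ k ∈ Finset.range m, tdBN n m Z x (k+1) k := by
    rw [Finset.sum_range_succ']
    have h0 : tdRR n (tdXi n m x 0) ⬝ᵥ Z.mulVec (tdRR n (tdVi n m x 0)) = 0 := by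
      simp [tdVi, tdRR_zero]
    rw [h0, add_zero]
    have hstep : ∀ k, tdRR n (tdXi n m x (k+1)) ⬝ᵥ Z.mulVec (tdRR n (tdVi n m x (k+1)))
        = tdBN n m Z x (k+1) k := fun k => by rw [tdVi_succ]; rfl
    simp only [hstep]
    rw [Finset.sum_range_succ, tdBN_top_left n m Z x (le_refl (m+1)), add_zero]
  have hR3' : ∑ k ∈ Finset.range (m+2),
      2 * (tdRR n (tdXi n m x k) ⬝ᵥ Z.mulVec (tdRR n (tdVi n m x k))) =
      2 * ∑ k ∈ Finset.range m, tdBN n m Z x (k+1) k := by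
    rw [← Finset.mul_sum, hR3]
  rw [hR1, hR2, hR3']
  simp only [← Finset.mul_sum]
  ring

/-- If `q` is a positive definite quadratic form (Gram matrix `Z`) with `q(x) ≥ 1` for
every nonzero integral vector, and `q_A` is the `A_{m+1}` Dynkin form (Gram matrix `A`),
then the tensor product form `q ⊗ q_A` also satisfies `(q ⊗ q_A)(x) ≥ 1` for every
nonzero integral vector `x`. -/
theorem tensor_with_dynkin_min_one (n m : ℕ)
    (Z : Matrix (Fin n) (Fin n) ℝ) (hsym : Z.IsSymm) (hpd : Z.PosDef)
    (hmin : ∀ x : Fin n → ℤ, x ≠ 0 →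
      1 ≤ (fun j => (x j : ℝ)) ⬝ᵥ Z.mulVec (fun j => (x j : ℝ)))
    (A : Matrix (Fin (m + 1)) (Fin (m + 1)) ℝ)
    (hA : A = Matrix.of fun (i j : Fin (m + 1)) => if i = j then 1 else
      if (i : ℕ) + 1 = (j : ℕ) ∨ (j : ℕ) + 1 = (i : ℕ) then -(1 / 2) else 0)
    (x : Fin n × Fin (m + 1) → ℤ) (hx : x ≠ 0) :
    1 ≤ (fun p => (x p : ℝ)) ⬝ᵥ (Z ⊗ₖ A).mulVec (fun p => (x p : ℝ)) := by
  rw [tdIdentity n m Z hsym A hA x]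
  set f : ℕ → ℝ := fun k => tdRR n (tdWi n m x k) ⬝ᵥ Z.mulVec (tdRR n (tdWi n m x k))
    with hf
  have hVtop : tdVi n m x (m + 2) = 0 := by
    have : tdVi n m x (m + 2) = tdXi n m x (m + 1) := tdVi_succ n m x (m + 1)
    rw [this, tdXi_top n m x (le_refl (m + 1))]
  have hsum0 : ∑ k ∈ Finset.range (m + 2), tdWi n m x k = 0 := by
    simp only [tdWi]
    rw [Finset.sum_range_sub (tdVi n m x) (m + 2), hVtop]
    simp [tdVi]
  have hnz : ∃ k ∈ Finset.range (m + 2), tdWi n m x k ≠ 0 := by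
    by_contra h
    push_neg at h
    have hV : ∀ k, k < m + 2 → tdVi n m x (k + 1) = 0 := by
      intro k
      induction k with
      | zero =>
        intro hk
        have h0 := h 0 (Finset.mem_range.mpr (by omega))
        have : tdVi n m x 1 - tdVi n m x 0 = 0 := h0
        have h1 : tdVi n m x 0 = 0 := by simp [tdVi]
        rw [h1, sub_zero] at this
        exact this
      | succ k ih =>
        intro hk
        have h0 := h (k + 1) (Finset.mem_range.mpr hk)
        have : tdVi n m x (k + 2) - tdVi n m x (k + 1) = 0 := h0
        rw [ih (by omega), sub_zero] at this
        exact this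
    apply hx
    funext p
    obtain ⟨a, i⟩ := p
    have hXi0 : tdXi n m x (i : ℕ) = 0 := by
      rw [← tdVi_succ]; exact hV (i : ℕ) (by have := i.isLt; omega)
    have := congrFun hXi0 a
    simpa [tdXi, i.isLt] using this
  obtain ⟨k1, hk1mem, hk1⟩ := hnz
  have hnz2 : ∃ k2 ∈ Finset.range (m + 2), k2 ≠ k1 ∧ tdWi n m x k2 ≠ 0 := by
    by_contra h
    push_neg at h
    have heq : ∑ k ∈ Finset.range (m + 2), tdWi n m x k = tdWi n m x k1 :=
      Finset.sum_eq_single_of_mem k1 hk1mem fun b hb hne =>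
        by_contra fun hne2 => hne2 (h b hb hne)
    rw [hsum0] at heq
    exact hk1 heq.symm
  obtain ⟨k2, hk2mem, hk21, hk2⟩ := hnz2
  have hnonneg : ∀ k, 0 ≤ f k := by
    intro k
    rcases eq_or_ne (tdRR n (tdWi n m x k)) 0 with h | h
    · rw [hf]; simp only; rw [h]; simp
    · have := hpd.dotProduct_mulVec_pos h
      rw [hf]; simp only
      have h2 : (0:ℝ) < tdRR n (tdWi n m x k) ⬝ᵥ Z.mulVec (tdRR n (tdWi n m x k)) := by
        simpa using this
      linarith
  have hone : ∀ k, tdWi n m x k ≠ 0 → 1 ≤ f k := by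
    intro k hk
    exact hmin (tdWi n m x k) hk
  have hsub : ({k1, k2} : Finset ℕ) ⊆ Finset.range (m + 2) := by
    intro a ha
    rcases Finset.mem_insert.mp ha with h | h
    · rwa [h]
    · rw [Finset.mem_singleton.mp h]; exact hk2mem
  have h2le : (2:ℝ) ≤ ∑ k ∈ Finset.range (m + 2), f k := by
    have hpair : ∑ k ∈ ({k1, k2} : Finset ℕ), f k = f k1 + f k2 :=
      Finset.sum_pair (Ne.symm hk21)
    have hle : ∑ k ∈ ({k1, k2} : Finset ℕ), f k ≤ ∑ k ∈ Finset.range (m + 2), f k :=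
      Finset.sum_le_sum_of_subset_of_nonneg hsub fun i _ _ => hnonneg i
    have := hone k1 hk1
    have := hone k2 hk2
    linarith
  linarith
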